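/- Double robustness in the propensity: if the outcome regression g_z(w) = E[δ(H) | Z=z, W=w] is correctly specified but the propensity model λ̄_z is arbitrary with values in (0,1), then E[ g_z(W) + 1{Z=z}·(δ(H) − g_z(W))/λ̄_z(W) ] = E[g_z(W)]. -/

import Mathlib

open Finset
open scoped BigOperators Classical

noncomputable section

/-- Expectation with respect to a probability mass function on a finite sample space. -/
def pExp {Ω : Type*} [Fintype Ω] (p : Ω → ℝ) (f : Ω → ℝ) : ℝ := ∑ ω, p ω * f ω

/-- Probability of an event. -/
def pPr {Ω : Type*} [Fintype Ω] (p : Ω → ℝ) (A : Set Ω) : ℝ :=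
  ∑ ω, if ω ∈ A then p ω else 0

/-- Elementary conditional expectation given an event of positive probability. -/
def pCE {Ω : Type*} [Fintype Ω] (p : Ω → ℝ) (f : Ω → ℝ) (A : Set Ω) : ℝ :=
  (∑ ω, if ω ∈ A then p ω * f ω else 0) / pPr p A
/-- Double robustness in the propensity: correct outcome regression, arbitrary propensity model. -/
theorem dr_score_misspecified_propensity
    {Ω 𝕎 : Type*} [Fintype Ω] [Fintype 𝕎]
    (p : Ω → ℝ) (hp : ∀ ω, 0 ≤ p ω) (hpsum : ∑ ω, p ω = 1)
    (Z : Ω → ℕ) (hZ : ∀ ω, Z ω = 0 ∨ Z ω = 1) (W : Ω → 𝕎)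
    (δ : Ω → ℝ) (z : ℕ)
    (hpos : ∀ w, 0 < pPr p {ω | Z ω = z ∧ W ω = w})
    (lambar : 𝕎 → ℝ)
    (hlambar : ∀ w, 0 < lambar w ∧ lambar w < 1)
    (g : 𝕎 → ℝ)
    (hg : ∀ w, g w = pCE p δ {ω | Z ω = z ∧ W ω = w}) :
    pExp p (fun ω =>
        g (W ω) + (if Z ω = z then (1:ℝ) else 0) * (δ ω - g (W ω)) / lambar (W ω))
    = pExp p (fun ω => g (W ω)) := by
  classical
  have key : ∀ w, ∑ ω, (if Z ω = z ∧ W ω = w then p ω * (δ ω - g w) else 0) = 0 := by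
    intro w
    have hP := hpos w
    have hgw := hg w
    rw [pCE, eq_div_iff hP.ne'] at hgw
    simp only [Set.mem_setOf_eq] at hgw
    have h1 : ∑ ω, (if Z ω = z ∧ W ω = w then p ω * (δ ω - g w) else 0)
        = (∑ ω, if Z ω = z ∧ W ω = w then p ω * δ ω else 0)
          - g w * pPr p {ω | Z ω = z ∧ W ω = w} := by
      rw [pPr, Finset.mul_sum, ← Finset.sum_sub_distrib]
      simp only [Set.mem_setOf_eq]
      refine Finset.sum_congr rfl fun ω _ => ?_
      by_cases h : Z ω = z ∧ W ω = w <;> simp [h, Set.mem_setOf_eq] <;> ring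
    rw [h1, hgw, sub_eq_zero]
  have main : ∑ ω, p ω * ((if Z ω = z then (1:ℝ) else 0) * (δ ω - g (W ω)) / lambar (W ω)) = 0 := by
    have hrw : ∀ ω, p ω * ((if Z ω = z then (1:ℝ) else 0) * (δ ω - g (W ω)) / lambar (W ω))
        = ∑ w, (if Z ω = z ∧ W ω = w then p ω * (δ ω - g w) else 0) / lambar w := by
      intro ω
      by_cases hz : Z ω = z
      · simp only [hz, if_true, true_and]
        rw [Finset.sum_congr rfl (fun w _ => by
          rw [show (if W ω = w then p ω * (δ ω - g w) else 0) / lambar w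
              = (if W ω = w then p ω * (δ ω - g w) / lambar w else 0) by
            split <;> simp])]
        rw [Finset.sum_ite_eq]
        simp; ring
      · simp [hz]
    calc ∑ ω, p ω * ((if Z ω = z then (1:ℝ) else 0) * (δ ω - g (W ω)) / lambar (W ω))
        = ∑ ω, ∑ w, (if Z ω = z ∧ W ω = w then p ω * (δ ω - g w) else 0) / lambar w :=
          Finset.sum_congr rfl fun ω _ => hrw ω
      _ = ∑ w, ∑ ω, (if Z ω = z ∧ W ω = w then p ω * (δ ω - g w) else 0) / lambar w :=
          Finset.sum_comm
      _ = ∑ w, (∑ ω, (if Z ω = z ∧ W ω = w then p ω * (δ ω - g w) else 0)) / lambar w := by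
          refine Finset.sum_congr rfl fun w _ => ?_
          rw [Finset.sum_div]
      _ = 0 := by simp [key]
  simp only [pExp, mul_add, Finset.sum_add_distrib, main, add_zero]
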